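/- Let 0→h→ĝ→g→0 be a non-abelian extension of Lie triple systems and γ ∈ Aut_h(ĝ). Then the map γ̄: g→g defined by γ̄(x) = p(γ(s(x))) for a section s of p is independent of the choice of section, and γ̄ is an automorphism of the Lie triple system g. -/
import Mathlib


universe u v w

/-- A Lie triple system over a field `k`. -/
structure LTS (k : Type u) (V : Type v) [Field k] [AddCommGroup V] [Module k V] where
  t : V →ₗ[k] V →ₗ[k] V →ₗ[k] V
  alt : ∀ x y, t x x y = 0
  cyc : ∀ x y z, t x y z + t y z x + t z x y = 0
  leib : ∀ a b x y z, t a b (t x y z) =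
    t (t a b x) y z + t x (t a b y) z + t x y (t a b z)

/-- `D_θ(x,y) a = θ(y,x) a - θ(x,y) a`. -/
def Dmap {G H : Type*} [AddCommGroup H] (θ : G → G → H → H) (x y : G) (a : H) : H :=
  θ y x a - θ x y a

/-- `D_ρ(x)(a,b) = ρ(x)(b,a) - ρ(x)(a,b)`. -/
def Drho {G H : Type*} [AddCommGroup H] (ρ : G → H → H → H) (x : G) (a b : H) : H :=
  ρ x b a - ρ x a b

/-- A non-abelian 3-cocycle on `g` with values in `h`: identities (3.2)–(3.14) of the paper,
together with the wedge conditions on `ω`, `θ`, `ρ`. -/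
def IsNACocycle {G H : Type*} [AddCommGroup H]
    (tg : G → G → G → G) (th : H → H → H → H)
    (ω : G → G → G → H) (θ : G → G → H → H) (ρ : G → H → H → H) : Prop :=
  (∀ x y, ω x x y = 0) ∧
  (∀ x a, θ x x a = 0) ∧
  (∀ x a, ρ x a a = 0) ∧
  (∀ x y z, ω x y z + ω y z x + ω z x y = 0) ∧
  (∀ x1 x2 y1 y2 y3,
    Dmap θ x1 x2 (ω y1 y2 y3) + ω x1 x2 (tg y1 y2 y3) =
      ω (tg x1 x2 y1) y2 y3 + θ y2 y3 (ω x1 x2 y1)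
      + ω y1 (tg x1 x2 y2) y3 - θ y1 y3 (ω x1 x2 y2)
      + ω y1 y2 (tg x1 x2 y3) + Dmap θ y1 y2 (ω x1 x2 y3)) ∧
  (∀ x y z w a,
    Dmap θ x y (θ z w a) - θ z w (Dmap θ x y a) =
      θ (tg x y z) w a + θ z (tg x y w) a
      - Drho ρ w (ω x y z) a - ρ z a (ω x y w)) ∧
  (∀ x y z w a,
    θ x (tg y z w) a - ρ x a (ω y z w) =
      θ z w (θ x y a) - θ y w (θ x z a) + Dmap θ y z (θ x w a)) ∧
  (∀ x y z a b,
    Dmap θ x y (ρ z a b) =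
      ρ z (Dmap θ x y a) b + ρ (tg x y z) a b + th (ω x y z) a b
      + ρ z a (Dmap θ x y b)) ∧
  (∀ x y z a b,
    Dmap θ y z (ρ x a b) =
      ρ x a (Dmap θ y z b) - ρ z (θ x y a) b + ρ y (θ x z a) b) ∧
  (∀ x y z a b,
    θ y z (ρ x a b) =
      ρ x a (θ y z b) - Drho ρ z (θ x y a) b - ρ y b (θ x z a)) ∧
  (∀ x y a b c,
    Dmap θ x y (th a b c) =
      th (Dmap θ x y a) b c + th a (Dmap θ x y b) c + th a b (Dmap θ x y c)) ∧
  (∀ x y a b c,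
    ρ x a (ρ y b c) =
      ρ y (ρ x a b) c + ρ y b (ρ x a c) - th (θ x y a) b c) ∧
  (∀ x y a b c,
    th a b (θ x y c) =
      θ x y (th a b c) - Drho ρ y (Drho ρ x a b) c - ρ x c (Drho ρ y a b)) ∧
  (∀ x a b c d,
    th a b (ρ x c d) =
      ρ x (th a b c) d - th c (Drho ρ x a b) d + ρ x c (th a b d)) ∧
  (∀ x a b c d,
    ρ x a (th b c d) =
      th (ρ x a b) c d + th b (ρ x a c) d + th b c (ρ x a d))

/-- The bracket `[x+a, y+b, z+c]_{(ω,θ,ρ)}` on `g ⊕ h`. -/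
def nabBr {G H : Type*} [AddCommGroup H]
    (tg : G → G → G → G) (th : H → H → H → H)
    (ω : G → G → G → H) (θ : G → G → H → H) (ρ : G → H → H → H) :
    G × H → G × H → G × H → G × H :=
  fun p q r =>
    (tg p.1 q.1 r.1,
      ω p.1 q.1 r.1 + Dmap θ p.1 q.1 r.2 + θ q.1 r.1 p.2 - θ p.1 r.1 q.2
        + Drho ρ r.1 p.2 q.2 + ρ p.1 q.2 r.2 - ρ q.1 p.2 r.2 + th p.2 q.2 r.2)

/-- Equivalence of two non-abelian 3-cocycles via `φ : g → h`
(equations (3.15)–(3.17) of the paper). -/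
def CocycleEquiv {G H : Type*} [AddCommGroup H]
    (tg : G → G → G → G) (th : H → H → H → H)
    (ω1 : G → G → G → H) (θ1 : G → G → H → H) (ρ1 : G → H → H → H)
    (ω2 : G → G → G → H) (θ2 : G → G → H → H) (ρ2 : G → H → H → H)
    (φ : G → H) : Prop :=
  (∀ x y z,
    ω1 x y z - ω2 x y z =
      θ2 x z (φ y) - Dmap θ2 x y (φ z) + ρ2 x (φ y) (φ z) - θ2 y z (φ x)
        + Drho ρ2 z (φ x) (φ y) - ρ2 y (φ x) (φ z)
        - th (φ x) (φ y) (φ z) + φ (tg x y z)) ∧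
  (∀ x y a,
    θ1 x y a - θ2 x y a =
      ρ2 x a (φ y) - Drho ρ2 y a (φ x) + th a (φ x) (φ y)) ∧
  (∀ x a b, ρ1 x a b - ρ2 x a b = th a (φ x) b)

/-- The operation `i_f(g)` on degree-one cochains (from equations (4.2)–(4.4)). -/
def ibrack {M : Type*} [AddCommGroup M] (f g : M → M → M → M) :
    M → M → M → M → M → M :=
  fun x1 y1 x2 y2 z =>
    f (g x1 y1 x2) y2 z + f x2 (g x1 y1 y2) z
      - (f x1 y1 (g x2 y2 z) - f x2 y2 (g x1 y1 z))

/-- The graded bracket `[f,g]_{Lts} = (-1)^{1·1} i_f(g) - i_g(f)` of two degree-one cochains. -/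
def brLts {M : Type*} [AddCommGroup M] (f g : M → M → M → M) :
    M → M → M → M → M → M :=
  fun x1 y1 x2 y2 z =>
    -(ibrack f g x1 y1 x2 y2 z) - ibrack g f x1 y1 x2 y2 z

/-- Non-abelian 1-cocycles on `g` with values in `h`. -/
def IsZ1 {G H : Type*} [AddCommGroup H]
    (tg : G → G → G → G) (th : H → H → H → H)
    (θ : G → G → H → H) (ρ : G → H → H → H) (φ : G → H) : Prop :=
  (∀ x a b, th a (φ x) b = 0) ∧
  (∀ x y a, th a (φ x) (φ y) - Drho ρ y a (φ x) + ρ x a (φ y) = 0) ∧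
  (∀ x y z,
    Drho ρ z (φ x) (φ y) - ρ y (φ x) (φ z) - θ y z (φ x)
      + ρ x (φ y) (φ z) + θ x z (φ y) - Dmap θ x y (φ z)
      = th (φ x) (φ y) (φ z) - φ (tg x y z))

/-- for `γ ∈ Aut_h(ĝ)`, the map `γ̄(x) = p (γ (s x))` does not depend on the
choice of section `s` of `p`, and for any section it is an automorphism of the Lie triple
system `g`. -/
theorem statement12 {k G H E : Type*} [Field k] [AddCommGroup G] [Module k G]
    [AddCommGroup H] [Module k H] [AddCommGroup E] [Module k E]
    (Lg : LTS k G) (Lh : LTS k H) (LE : LTS k E)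
    (i : H →ₗ[k] E) (p : E →ₗ[k] G)
    (ihom : ∀ a b c, i (Lh.t a b c) = LE.t (i a) (i b) (i c))
    (phom : ∀ x y z, p (LE.t x y z) = Lg.t (p x) (p y) (p z))
    (iinj : Function.Injective i) (psurj : Function.Surjective p)
    (hexact : LinearMap.range i = LinearMap.ker p)
    (γ : E ≃ₗ[k] E)
    (γhom : ∀ x y z, γ (LE.t x y z) = LE.t (γ x) (γ y) (γ z))
    (γh : Submodule.map (γ : E →ₗ[k] E) (LinearMap.range i) = LinearMap.range i) :
    (∀ s1 s2 : G →ₗ[k] E, (∀ x, p (s1 x) = x) → (∀ x, p (s2 x) = x) →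
      ∀ x, p (γ (s1 x)) = p (γ (s2 x))) ∧
    (∀ s : G →ₗ[k] E, (∀ x, p (s x) = x) →
      Function.Bijective (fun x => p (γ (s x))) ∧
      (∀ x y z, p (γ (s (Lg.t x y z))) =
        Lg.t (p (γ (s x))) (p (γ (s y))) (p (γ (s z))))) := by
  -- γ maps ker p into ker p
  have key : ∀ e : E, p e = 0 → p (γ e) = 0 := by
    intro e he
    have h1 : e ∈ LinearMap.ker p := he
    rw [← hexact] at h1
    have h2 : γ e ∈ Submodule.map (γ : E →ₗ[k] E) (LinearMap.range i) := ⟨e, h1, rfl⟩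
    rw [γh, hexact] at h2
    exact h2
  -- converse: p (γ e) = 0 → p e = 0
  have key' : ∀ e : E, p (γ e) = 0 → p e = 0 := by
    intro e he
    have h1 : γ e ∈ LinearMap.ker p := he
    rw [← hexact, ← γh] at h1
    obtain ⟨e', he', heq⟩ := h1
    have : e' = e := γ.injective heq
    subst this
    rw [hexact] at he'
    exact he'
  constructor
  · intro s1 s2 hs1 hs2 x
    have hd : p (s1 x - s2 x) = 0 := by rw [map_sub, hs1, hs2, sub_self]
    have := key _ hd
    rw [map_sub, map_sub] at this
    exact sub_eq_zero.mp this
  · intro s hs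
    refine ⟨⟨?_, ?_⟩, ?_⟩
    · intro x y hxy
      simp only at hxy
      have hd : p (γ (s x - s y)) = 0 := by
        rw [map_sub, map_sub, hxy, sub_self]
      have h0 : p (s x - s y) = 0 := key' _ hd
      rw [map_sub, hs, hs] at h0
      exact sub_eq_zero.mp h0
    · intro y
      obtain ⟨e0, he0⟩ := psurj y
      obtain ⟨e1, he1⟩ := γ.surjective e0
      refine ⟨p e1, ?_⟩
      have hd : p (s (p e1) - e1) = 0 := by rw [map_sub, hs, sub_self]
      have := key _ hd
      rw [map_sub, map_sub] at this
      simp only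
      rw [sub_eq_zero] at this
      rw [this, he1, he0]
    · intro x y z
      have hd : p (s (Lg.t x y z) - LE.t (s x) (s y) (s z)) = 0 := by
        rw [map_sub, hs, phom, hs, hs, hs, sub_self]
      have hk := key _ hd
      rw [map_sub, map_sub, sub_eq_zero] at hk
      rw [hk, γhom, phom]
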